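/- arXiv:math/0610809 — 2 statements merged into one kernel-verified Lean document; each statement's English description precedes it below -/
import Mathlib

section
/- For all real numbers y1, y2, y ≥ 0, one has (y1 + y2 − y)⁺ = ∫₀^y 1{y1 ≥ z, y2 ≥ y − z} dz + ∫_y^∞ (1{y1 ≥ z} + 1{y2 ≥ z}) dz. -/
open MeasureTheory Set

lemma tail_int (a b : ℝ) :
    ∫ z in Set.Ioi a, (if z ≤ b then (1 : ℝ) else 0) = max (b - a) 0 := by
  have hfun : (fun z => if z ≤ b then (1 : ℝ) else 0)
      = (Set.Iic b).indicator (fun _ => (1 : ℝ)) := by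
    ext z; simp [Set.indicator, Set.mem_Iic]
  rw [hfun, MeasureTheory.setIntegral_indicator measurableSet_Iic,
    Set.Ioi_inter_Iic, MeasureTheory.setIntegral_const, Real.volume_real_Ioc]
  simp [ENNReal.toReal_ofReal', max_comm]

lemma tail_integrable (a b : ℝ) :
    IntegrableOn (fun z => if z ≤ b then (1 : ℝ) else 0) (Set.Ioi a) := by
  have hfun : (fun z => if z ≤ b then (1 : ℝ) else 0)
      = (Set.Iic b).indicator (fun _ => (1 : ℝ)) := by
    ext z; simp [Set.indicator, Set.mem_Iic]
  rw [hfun, IntegrableOn, MeasureTheory.integrable_indicator_iff measurableSet_Iic]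
  rw [IntegrableOn, Measure.restrict_restrict measurableSet_Iic, integrable_const_iff]
  right
  rw [isFiniteMeasure_restrict, Set.Iic_inter_Ioi,
    Real.volume_Ioc]
  exact ENNReal.ofReal_ne_top

theorem call_payoff_sum_decomposition (y1 y2 y : ℝ) (h1 : 0 ≤ y1) (h2 : 0 ≤ y2) (hy : 0 ≤ y) :
    max (y1 + y2 - y) 0 =
      (∫ z in Set.Ioc (0 : ℝ) y, (if z ≤ y1 ∧ y - z ≤ y2 then (1 : ℝ) else 0)) +
      ∫ z in Set.Ioi y, ((if z ≤ y1 then (1 : ℝ) else 0) + (if z ≤ y2 then (1 : ℝ) else 0)) := by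
  have hsplit : (∫ z in Set.Ioi y, ((if z ≤ y1 then (1 : ℝ) else 0)
      + (if z ≤ y2 then (1 : ℝ) else 0)))
      = max (y1 - y) 0 + max (y2 - y) 0 := by
    rw [MeasureTheory.integral_add (tail_integrable y y1) (tail_integrable y y2),
      tail_int, tail_int]
  have hfirst : (∫ z in Set.Ioc (0 : ℝ) y, (if z ≤ y1 ∧ y - z ≤ y2 then (1 : ℝ) else 0))
      = max (min y y1 - max 0 (y - y2)) 0 := by
    have hae : (fun z => if z ≤ y1 ∧ y - z ≤ y2 then (1 : ℝ) else 0)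
        =ᵐ[volume.restrict (Set.Ioc (0:ℝ) y)]
        (Set.Ioc (y - y2) y1).indicator (fun _ => (1 : ℝ)) := by
      refine ae_restrict_of_ae ?_
      have h0 : volume ({y - y2} : Set ℝ) = 0 := Real.volume_singleton
      rw [← MeasureTheory.compl_mem_ae_iff] at h0
      filter_upwards [h0] with z hz
      simp only [Set.mem_compl_iff, Set.mem_singleton_iff] at hz
      simp only [Set.indicator, Set.mem_Ioc]
      have : (z ≤ y1 ∧ y - z ≤ y2) ↔ (y - y2 < z ∧ z ≤ y1) := by
        constructor
        · rintro ⟨ha, hb⟩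
          exact ⟨lt_of_le_of_ne (by linarith) (fun h => hz h.symm), ha⟩
        · rintro ⟨ha, hb⟩; exact ⟨hb, by linarith⟩
      rw [if_congr this rfl rfl]
    rw [MeasureTheory.integral_congr_ae hae,
      MeasureTheory.setIntegral_indicator measurableSet_Ioc,
      Set.Ioc_inter_Ioc, MeasureTheory.setIntegral_const, Real.volume_real_Ioc]
    simp [ENNReal.toReal_ofReal', max_comm]
  rw [hsplit, hfirst]
  rcases le_total y y1 with ha | ha <;> rcases le_total y y2 with hb | hb <;>
    rcases le_total (y - y2) 0 with hc | hc <;>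
    simp [min_def, max_def] <;> split_ifs <;> linarith
end

section
/- Let (Y_t)_{t∈[0,T]} be a continuous martingale, x ∈ ℝ, z ∈ ℝ, and t_z = inf{t ≥ 0 : Y_t ≤ z} with Y_{t_z} = z on {t_z ≤ T}. If E[(X_T − y)⁺ 1{τ > T}] = E[(x − Y_{T ∧ t_z})⁺] and E[(X_T − y)⁺] = E[(x − Y_T)⁺] (Put–Call duality), then E[(X_T − y)⁺ 1{τ ≤ T}] = E[(Y_T − x)⁺ 1{t_z ≤ T}]. -/
open MeasureTheory Set Filter Topology

/-- Optional stopping for a continuous martingale on `[0, T]` with a stopping time: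
`∫ Y_{T ∧ tz} = ∫ Y_T`.  Proved by approximating `tz` from above by stopping times
with countable (dyadic) range and using the optional sampling theorem together with
Vitali's convergence theorem (uniform integrability of conditional expectations). -/
lemma optional_stopping_integral_aux
    {Ω : Type*} {mΩ : MeasurableSpace Ω} {μ : Measure Ω} [IsProbabilityMeasure μ]
    (ℱ : Filtration ℝ mΩ) (Y : ℝ → Ω → ℝ)
    (hmart : Martingale Y ℱ μ)
    (hcont : ∀ ω, Continuous fun t => Y t ω)
    (tz : Ω → ℝ) (htz : IsStoppingTime ℱ (fun ω => (tz ω : WithTop ℝ))) (T : ℝ)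
    (hYstopint : Integrable (fun ω => Y (min T (tz ω)) ω) μ) :
    ∫ ω, Y (min T (tz ω)) ω ∂μ = ∫ ω, Y T ω ∂μ := by
  classical
  have h2 : ∀ n : ℕ, (0:ℝ) < 2 ^ n := fun n => by positivity
  set σ : ℕ → Ω → ℝ := fun n ω => min T ((⌈tz ω * 2 ^ n⌉ : ℝ) / 2 ^ n) with hσ_def
  -- each σ n is a stopping time
  have hσ_st : ∀ n, IsStoppingTime ℱ (fun ω => (σ n ω : WithTop ℝ)) := by
    intro n t
    simp only [WithTop.coe_le_coe]
    by_cases hTt : T ≤ t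
    · have : {ω | σ n ω ≤ t} = Set.univ := by
        ext ω
        simp only [Set.mem_setOf_eq, Set.mem_univ, iff_true]
        exact le_trans (min_le_left _ _) hTt
      rw [this]
      exact MeasurableSet.univ
    · set u : ℝ := (⌊t * 2 ^ n⌋ : ℝ) / 2 ^ n with hu
      have hut : u ≤ t := by
        rw [hu, div_le_iff₀ (h2 n)]
        exact Int.floor_le _
      have hset : {ω | σ n ω ≤ t} = {ω | tz ω ≤ u} := by
        ext ω
        simp only [Set.mem_setOf_eq, hσ_def, min_le_iff, or_iff_right hTt]
        rw [div_le_iff₀ (h2 n), hu, le_div_iff₀ (h2 n)]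
        constructor
        · intro h
          exact Int.ceil_le.mp (Int.le_floor.mpr h)
        · intro h
          exact_mod_cast Int.le_floor.mp (Int.ceil_le.mpr h)
      rw [hset]
      exact ℱ.mono hut _ (by simpa only [WithTop.coe_le_coe] using htz u)
  have hσ_le : ∀ n, ∀ ω, σ n ω ≤ T := fun n ω => min_le_left _ _
  have hσ_range : ∀ n, (Set.range (σ n)).Countable := by
    intro n
    refine (Set.countable_range (fun k : ℤ => min T ((k : ℝ) / 2 ^ n))).mono ?_
    rintro s ⟨ω, rfl⟩
    exact ⟨⌈tz ω * 2 ^ n⌉, rfl⟩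
  -- optional sampling at each discrete stopping time
  have hae : ∀ n, stoppedValue Y (fun ω => (σ n ω : WithTop ℝ)) =ᵐ[μ] μ[Y T | (hσ_st n).measurableSpace] :=
    fun n => hmart.stoppedValue_ae_eq_condExp_of_le_const_of_countable_range
      (hσ_st n) (fun ω => WithTop.coe_le_coe.mpr (hσ_le n ω)) (((hσ_range n).image (fun r : ℝ => (r : WithTop ℝ))).mono (by rintro _ ⟨ω, rfl⟩; exact ⟨σ n ω, ⟨ω, rfl⟩, rfl⟩))
  have hint : ∀ n, Integrable (stoppedValue Y (fun ω => (σ n ω : WithTop ℝ))) μ :=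
    fun n => integrable_condExp.congr (hae n).symm
  have hInt_eq : ∀ n, ∫ ω, stoppedValue Y (fun ω => (σ n ω : WithTop ℝ)) ω ∂μ = ∫ ω, Y T ω ∂μ := by
    intro n
    rw [integral_congr_ae (hae n),
      integral_condExp ((hσ_st n).measurableSpace_le_of_le (fun ω => WithTop.coe_le_coe.mpr (hσ_le n ω)))]
  -- uniform integrability
  have hui : UnifIntegrable (fun n => stoppedValue Y (fun ω => (σ n ω : WithTop ℝ))) 1 μ := by
    have h1 := (hmart.integrable T).uniformIntegrable_condExp
      (fun n => (hσ_st n).measurableSpace_le_of_le (fun ω => WithTop.coe_le_coe.mpr (hσ_le n ω)))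
    exact h1.2.1.ae_eq fun n => (hae n).symm
  -- pointwise convergence
  have htend : ∀ ω, Tendsto (fun n => stoppedValue Y (fun ω => (σ n ω : WithTop ℝ)) ω) atTop
      (𝓝 (Y (min T (tz ω)) ω)) := by
    intro ω
    have hdy : Tendsto (fun n : ℕ => (⌈tz ω * 2 ^ n⌉ : ℝ) / 2 ^ n) atTop (𝓝 (tz ω)) := by
      have hle : ∀ n : ℕ, tz ω ≤ (⌈tz ω * 2 ^ n⌉ : ℝ) / 2 ^ n := fun n => by
        rw [le_div_iff₀ (h2 n)]
        exact Int.le_ceil _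
      have hub : ∀ n : ℕ, (⌈tz ω * 2 ^ n⌉ : ℝ) / 2 ^ n ≤ tz ω + (1/2 : ℝ) ^ n := fun n => by
        rw [div_le_iff₀ (h2 n)]
        have h := (Int.ceil_lt_add_one (tz ω * 2 ^ n)).le
        have key : ((1:ℝ)/2) ^ n * 2 ^ n = 1 := by
          rw [← mul_pow]; norm_num
        have expand : (tz ω + (1/2 : ℝ) ^ n) * 2 ^ n = tz ω * 2 ^ n + 1 := by
          rw [add_mul, key]
        linarith
      have hlim : Tendsto (fun n : ℕ => tz ω + (1/2 : ℝ) ^ n) atTop (𝓝 (tz ω)) := by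
        have : Tendsto (fun n : ℕ => ((1:ℝ)/2) ^ n) atTop (𝓝 0) :=
          tendsto_pow_atTop_nhds_zero_of_lt_one (by norm_num) (by norm_num)
        simpa using tendsto_const_nhds.add this
      exact tendsto_of_tendsto_of_tendsto_of_le_of_le tendsto_const_nhds hlim hle hub
    have h1 : Tendsto (fun n => σ n ω) atTop (𝓝 (min T (tz ω))) :=
      tendsto_const_nhds.min hdy
    have := ((hcont ω).tendsto (min T (tz ω))).comp h1
    exact this
  -- Vitali convergence and conclusion
  have hLp : Tendsto (fun n => eLpNorm (stoppedValue Y (fun ω => (σ n ω : WithTop ℝ))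
      - fun ω => Y (min T (tz ω)) ω) 1 μ) atTop (𝓝 0) :=
    tendsto_Lp_finite_of_tendsto_ae le_rfl ENNReal.one_ne_top
      (fun n => (hint n).1) (memLp_one_iff_integrable.2 hYstopint) hui
      (Filter.Eventually.of_forall htend)
  have hto : Tendsto (fun n => ∫ ω, stoppedValue Y (fun ω => (σ n ω : WithTop ℝ)) ω ∂μ) atTop
      (𝓝 (∫ ω, Y (min T (tz ω)) ω ∂μ)) :=
    tendsto_integral_of_L1 _ hYstopint.aestronglyMeasurable (Filter.Eventually.of_forall hint)
      (by simpa [eLpNorm_one_eq_lintegral_enorm, Pi.sub_apply] using hLp)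
  have hconst : Tendsto (fun n => ∫ ω, stoppedValue Y (fun ω => (σ n ω : WithTop ℝ)) ω ∂μ) atTop
      (𝓝 (∫ ω, Y T ω ∂μ)) := by
    have : (fun n => ∫ ω, stoppedValue Y (fun ω => (σ n ω : WithTop ℝ)) ω ∂μ) = fun _ => ∫ ω, Y T ω ∂μ :=
      funext hInt_eq
    rw [this]
    exact tendsto_const_nhds
  exact tendsto_nhds_unique hto hconst

theorem barrier_duality_on_hit_event
    {Ω : Type*} {mΩ : MeasurableSpace Ω} {μ : Measure Ω} [IsProbabilityMeasure μ]
    (ℱ : Filtration ℝ mΩ) (Y : ℝ → Ω → ℝ)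
    (hmart : Martingale Y ℱ μ)
    (hcont : ∀ ω, Continuous fun t => Y t ω)
    (XT : Ω → ℝ) (τ tz : Ω → ℝ) (hτ : Measurable τ) (htz : IsStoppingTime ℱ (fun ω => (tz ω : WithTop ℝ)))
    (x y z T : ℝ) (hT : 0 < T) (hxz : z ≤ x)
    (hXTint : Integrable XT μ)
    (hYTint : Integrable (Y T) μ)
    (hYstopint : Integrable (fun ω => Y (min T (tz ω)) ω) μ)
    (hstop : ∀ ω, tz ω ≤ T → Y (min T (tz ω)) ω = z)
    (hdual_barrier : ∫ ω in {ω | T < τ ω}, max (XT ω - y) 0 ∂μ =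
      ∫ ω, max (x - Y (min T (tz ω)) ω) 0 ∂μ)
    (hdual : ∫ ω, max (XT ω - y) 0 ∂μ = ∫ ω, max (x - Y T ω) 0 ∂μ) :
    ∫ ω in {ω | τ ω ≤ T}, max (XT ω - y) 0 ∂μ =
      ∫ ω in {ω | tz ω ≤ T}, max (Y T ω - x) 0 ∂μ := by
  have hkey : ∫ ω, Y (min T (tz ω)) ω ∂μ = ∫ ω, Y T ω ∂μ :=
    optional_stopping_integral_aux ℱ Y hmart hcont tz htz T hYstopint
  set P : Set Ω := {ω | tz ω ≤ T} with hP
  have hPmeas : MeasurableSet P := by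
    have := ℱ.le T _ (htz T)
    simp only [WithTop.coe_le_coe] at this
    exact this
  have hQmeas : MeasurableSet {ω | τ ω ≤ T} := measurableSet_le hτ measurable_const
  have hX : Integrable (fun ω => max (XT ω - y) 0) μ :=
    (hXTint.sub (integrable_const y)).pos_part
  have hY1 : Integrable (fun ω => max (x - Y T ω) 0) μ :=
    ((integrable_const x).sub hYTint).pos_part
  have hY3 : Integrable (fun ω => max (x - Y (min T (tz ω)) ω) 0) μ :=
    ((integrable_const x).sub hYstopint).pos_part
  have hcompl : {ω | T < τ ω} = {ω | τ ω ≤ T}ᶜ := by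
    ext ω; simp [not_le]
  -- split the XT integral
  have hsplit1 : ∫ ω in {ω | τ ω ≤ T}, max (XT ω - y) 0 ∂μ
      + ∫ ω in {ω | T < τ ω}, max (XT ω - y) 0 ∂μ = ∫ ω, max (XT ω - y) 0 ∂μ := by
    rw [hcompl]
    exact integral_add_compl hQmeas hX
  -- split the (x - Y_T)⁺ integral over P
  have e1 : ∫ ω in P, max (x - Y T ω) 0 ∂μ + ∫ ω in Pᶜ, max (x - Y T ω) 0 ∂μ
      = ∫ ω, max (x - Y T ω) 0 ∂μ := integral_add_compl hPmeas hY1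
  -- split the (x - Y_stop)⁺ integral over P
  have e2 : ∫ ω in P, max (x - Y (min T (tz ω)) ω) 0 ∂μ
      + ∫ ω in Pᶜ, max (x - Y (min T (tz ω)) ω) 0 ∂μ
      = ∫ ω, max (x - Y (min T (tz ω)) ω) 0 ∂μ := integral_add_compl hPmeas hY3
  have hPc_stop : ∀ ω ∈ Pᶜ, Y (min T (tz ω)) ω = Y T ω := by
    intro ω hω
    have : min T (tz ω) = T := min_eq_left (le_of_lt (not_le.mp hω))
    rw [this]
  have e3 : ∫ ω in Pᶜ, max (x - Y (min T (tz ω)) ω) 0 ∂μ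
      = ∫ ω in Pᶜ, max (x - Y T ω) 0 ∂μ := by
    refine setIntegral_congr_fun hPmeas.compl fun ω hω => ?_
    rw [hPc_stop ω hω]
  have e4 : ∫ ω in P, max (x - Y (min T (tz ω)) ω) 0 ∂μ
      = ∫ ω in P, (x - Y (min T (tz ω)) ω) ∂μ := by
    refine setIntegral_congr_fun hPmeas fun ω hω => ?_
    rw [hstop ω hω]
    exact max_eq_left (by linarith)
  -- martingale step: ∫_P Y_stop = ∫_P Y_T
  have e5a : ∫ ω in P, Y (min T (tz ω)) ω ∂μ = ∫ ω in P, Y T ω ∂μ := by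
    have hA := integral_add_compl hPmeas hYstopint
    have hB := integral_add_compl hPmeas hYTint
    have hC : ∫ ω in Pᶜ, Y (min T (tz ω)) ω ∂μ = ∫ ω in Pᶜ, Y T ω ∂μ :=
      setIntegral_congr_fun hPmeas.compl fun ω hω => hPc_stop ω hω
    linarith
  have e5 : ∫ ω in P, (x - Y (min T (tz ω)) ω) ∂μ = ∫ ω in P, (x - Y T ω) ∂μ := by
    rw [integral_sub (integrable_const x).restrict hYstopint.restrict,
      integral_sub (integrable_const x).restrict hYTint.restrict, e5a]
  -- final pointwise identity: a⁺ - a = (-a)⁺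
  have e6 : ∫ ω in P, max (x - Y T ω) 0 ∂μ - ∫ ω in P, (x - Y T ω) ∂μ
      = ∫ ω in P, max (Y T ω - x) 0 ∂μ := by
    have hxy : Integrable (fun ω => x - Y T ω) μ := (integrable_const x).sub hYTint
    rw [← integral_sub hY1.restrict hxy.restrict]
    refine integral_congr_ae (Filter.Eventually.of_forall fun ω => ?_)
    have h := max_zero_sub_max_neg_zero_eq_self (x - Y T ω)
    have hneg : -(x - Y T ω) = Y T ω - x := by ring
    rw [hneg] at h
    show max (x - Y T ω) 0 - (x - Y T ω) = max (Y T ω - x) 0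
    linarith
  linarith [hdual, hdual_barrier, hsplit1, e1, e2, e3, e4, e5, e5a, e6]
end
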